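/- arXiv:2202.07069 — 2 statements merged into one kernel-verified Lean document; each statement's English description precedes it below -/
import Mathlib

section
/- Let V be a commutative unital quantale, F : Type u ⥤ Type u a functor, L a lifting of F to V-Cat that preserves initial morphisms, and E a lax extension of F to V-Rel. For a V-relation r : X → Y → V and p : X → κ → V define (r⋆p) y i = ⨆_x (p x i ⊗ r x y). Then the following are equivalent: (i) for all X, Y : Type u, all r : X → Y → V, and all 𝔵 ∈ F.obj X, 𝔶 ∈ F.obj Y, the infimum over all types κ : Type u, all monotone κ-ary predicate liftings λ for F compatible with L, and all p : X → κ → V, of hom (λ_X p 𝔵) (λ_Y (r⋆p) 𝔶), is ≤ E r 𝔵 𝔶; (ii) for every V-category (X,a) and all 𝔵,𝔶 ∈ F.obj X, L a 𝔵 𝔶 ≤ E a 𝔵 𝔶. (Adjunction between taking Kantorovich extensions of compatible monotone predicate liftings and inducing liftings from lax extensions.) -/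
universe u v w

open CategoryTheory

/-- `V` is a (commutative unital) quantale: the tensor distributes over suprema. -/
def QuantaleLaw (V : Type u) [CompleteLattice V] [CommMonoid V] : Prop :=
  ∀ (u : V) (s : Set V), u * sSup s = ⨆ v ∈ s, u * v

/-- Internal hom of the quantale: `hom u w = ⨆ {v | u ⊗ v ≤ w}`. -/
def qhom {V : Type u} [CompleteLattice V] [CommMonoid V] (u w : V) : V :=
  sSup {v | u * v ≤ w}

/-- `a` is a `V`-category structure on `X`. -/
def IsVCat {V : Type u} [CompleteLattice V] [CommMonoid V] {X : Type v}
    (a : X → X → V) : Prop :=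
  (∀ x, (1 : V) ≤ a x x) ∧ ∀ x y z, a x y * a y z ≤ a x z

/-- `f` is a `V`-functor from `(X,a)` to `(Y,b)`. -/
def IsVFunctor {V : Type u} [CompleteLattice V] {X : Type v} {Y : Type w}
    (a : X → X → V) (b : Y → Y → V) (f : X → Y) : Prop :=
  ∀ x y, a x y ≤ b (f x) (f y)

/-- `f` is an initial `V`-functor from `(X,a)` to `(Y,b)`. -/
def IsInitialVFunctor {V : Type u} {X : Type v} {Y : Type w}
    (a : X → X → V) (b : Y → Y → V) (f : X → Y) : Prop :=
  ∀ x y, a x y = b (f x) (f y)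

/-- The `V`-category structure of the power `V^κ`. -/
def powStr {V : Type u} [CompleteLattice V] [CommMonoid V] (κ : Type v)
    (p q : κ → V) : V :=
  ⨅ i, qhom (p i) (q i)

/-- The graph of a function, as a `V`-relation: `k` on the graph, `⊥` elsewhere. -/
def fnGraph {V : Type u} [CompleteLattice V] [CommMonoid V] {X : Type v} {Y : Type w}
    (f : X → Y) : X → Y → V :=
  fun x y => ⨆ _ : f x = y, (1 : V)

/-- A lifting of a `Set`-functor `F` to `V`-Cat. -/
structure Lifting (V : Type u) [CompleteLattice V] [CommMonoid V]
    (F : Type u ⥤ Type u) where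
  str : ∀ {X : Type u}, (X → X → V) → F.obj X → F.obj X → V
  isVCat : ∀ {X : Type u} (a : X → X → V), IsVCat a → IsVCat (str a)
  map : ∀ {X Y : Type u} (a : X → X → V) (b : Y → Y → V) (f : X → Y),
    IsVCat a → IsVCat b → IsVFunctor a b f →
    IsVFunctor (str a) (str b) (F.map (TypeCat.ofHom f))

/-- A `κ`-ary `V`-valued predicate lifting for a `Set`-functor `F`. -/
structure PredLifting (V : Type u) [CompleteLattice V] [CommMonoid V]
    (F : Type u ⥤ Type u) (κ : Type u) where
  app : ∀ {X : Type u}, (X → κ → V) → F.obj X → V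
  natural : ∀ {X Y : Type u} (f : X → Y) (p : Y → κ → V) (t : F.obj X),
    app (fun x => p (f x)) t = app p (F.map (TypeCat.ofHom f) t)

/-- A predicate lifting is monotone if it preserves the pointwise order of predicates. -/
def PredLifting.Mono {V : Type u} [CompleteLattice V] [CommMonoid V]
    {F : Type u ⥤ Type u} {κ : Type u} (lam : PredLifting V F κ) : Prop :=
  ∀ (X : Type u) (p q : X → κ → V), (∀ x i, p x i ≤ q x i) →
    ∀ t, lam.app p t ≤ lam.app q t

/-- A predicate lifting is compatible with a lifting `L` if it lifts `V`-functorial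
predicates to `V`-functorial predicates. -/
def Compatible {V : Type u} [CompleteLattice V] [CommMonoid V] {F : Type u ⥤ Type u}
    (L : Lifting V F) {κ : Type u} (lam : PredLifting V F κ) : Prop :=
  ∀ (X : Type u) (a : X → X → V), IsVCat a → ∀ f : X → κ → V,
    IsVFunctor a (powStr κ) f → IsVFunctor (L.str a) qhom (lam.app f)

/-- The Kantorovich `V`-category structure on `F.obj X` induced by a family of
predicate liftings. -/
noncomputable def kantStr {V : Type u} [CompleteLattice V] [CommMonoid V]
    {F : Type u ⥤ Type u} {ι : Type v} {κ : ι → Type u}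
    (Λ : ∀ l, PredLifting V F (κ l)) {X : Type u} (a : X → X → V)
    (t s : F.obj X) : V :=
  ⨅ l, ⨅ f : {f : X → κ l → V // IsVFunctor a (powStr (κ l)) f},
    qhom ((Λ l).app f.1 t) ((Λ l).app f.1 s)

/-- A generalized predicate lifting for `(F, L)` with parameter `V`-category `(A, α)`. -/
structure GenPredLifting (V : Type u) [CompleteLattice V] [CommMonoid V]
    (F : Type u ⥤ Type u) (L : Lifting V F) (A : Type u) (α : A → A → V) where
  app : ∀ {Z : Type u}, (Z → Z → V) → (Z → A) → F.obj Z → V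
  isVFunctor : ∀ {Z : Type u} (c : Z → Z → V), IsVCat c → ∀ f : Z → A,
    IsVFunctor c α f → IsVFunctor (L.str c) qhom (app c f)
  natural : ∀ {Z Z' : Type u} (c : Z → Z → V) (c' : Z' → Z' → V),
    IsVCat c → IsVCat c' → ∀ (u : Z → Z'), IsVFunctor c c' u →
    ∀ (g : Z' → A), IsVFunctor c' α g →
    ∀ t : F.obj Z, app c (fun z => g (u z)) t = app c' g (F.map (TypeCat.ofHom u) t)

/-- A lax extension of a `Set`-functor `F` to `V`-Rel. -/
structure LaxExt (V : Type u) [CompleteLattice V] [CommMonoid V]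
    (F : Type u ⥤ Type u) where
  ext : ∀ {X Y : Type u}, (X → Y → V) → F.obj X → F.obj Y → V
  mono : ∀ {X Y : Type u} (r r' : X → Y → V), (∀ x y, r x y ≤ r' x y) →
    ∀ t s, ext r t s ≤ ext r' t s
  comp : ∀ {X Y Z : Type u} (r : X → Y → V) (s : Y → Z → V)
    (t : F.obj X) (w : F.obj Z),
    (⨆ u : F.obj Y, ext r t u * ext s u w) ≤
      ext (fun x z => ⨆ y, r x y * s y z) t w
  lax_map : ∀ {X Y : Type u} (f : X → Y) (t : F.obj X),
    (1 : V) ≤ ext (fnGraph f) t (F.map (TypeCat.ofHom f) t)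
  lax_map_op : ∀ {X Y : Type u} (f : X → Y) (t : F.obj X),
    (1 : V) ≤ ext (fun y x => fnGraph f x y) (F.map (TypeCat.ofHom f) t) t

section Aux

variable {V : Type u} [CompleteLattice V] [CommMonoid V]

lemma qmul_iSup (hV : QuantaleLaw V) {ι : Sort v} (u : V) (s : ι → V) :
    u * (⨆ i, s i) = ⨆ i, u * s i := by
  rw [iSup, hV u (Set.range s)]
  exact iSup_range

lemma qmul_le_qmul (hV : QuantaleLaw V) (u : V) {v w : V} (h : v ≤ w) :
    u * v ≤ u * w := by
  have h2 : u * sSup {v, w} = ⨆ x ∈ ({v, w} : Set V), u * x := hV u _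
  have h3 : sSup ({v, w} : Set V) = w := by
    rw [sSup_insert, sSup_singleton, sup_eq_right.mpr h]
  rw [h3] at h2
  rw [h2]
  exact le_biSup _ (by simp)

lemma qhom_adj (hV : QuantaleLaw V) {u v w : V} : v ≤ qhom u w ↔ u * v ≤ w := by
  constructor
  · intro h
    refine le_trans (qmul_le_qmul hV u h) ?_
    rw [qhom, hV]
    exact iSup₂_le fun x hx => hx
  · exact fun h => le_sSup h

lemma qhom_one (w : V) : qhom (1 : V) w = w := by
  refine le_antisymm (sSup_le fun v hv => by simpa using hv) (le_sSup (by simp))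

lemma qhom_anti (hV : QuantaleLaw V) {u u' : V} (h : u ≤ u') (w : V) :
    qhom u' w ≤ qhom u w := by
  refine sSup_le_sSup fun v hv => ?_
  have : u * v ≤ u' * v := by
    rw [mul_comm u v, mul_comm u' v]; exact qmul_le_qmul hV v h
  exact le_trans this hv

/-- The evaluation predicate lifting induced by a lax extension `E` and an
element `z : F.obj κ`. -/
noncomputable def evalLift (hV : QuantaleLaw V) {F : Type u ⥤ Type u}
    (E : LaxExt V F) {κ : Type u} (z : F.obj κ) : PredLifting V F κ where
  app {W} q w := E.ext (fun i x => q x i) z w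
  natural {X Y} f p t := by
    apply le_antisymm
    · calc E.ext (fun i x => p (f x) i) z t
          = E.ext (fun i x => p (f x) i) z t * 1 := (mul_one _).symm
        _ ≤ E.ext (fun i x => p (f x) i) z t * E.ext (fnGraph f) t (F.map (TypeCat.ofHom f) t) :=
            qmul_le_qmul hV _ (E.lax_map f t)
        _ ≤ ⨆ u, E.ext (fun i x => p (f x) i) z u * E.ext (fnGraph f) u (F.map (TypeCat.ofHom f) t) :=
            le_iSup_of_le t le_rfl
        _ ≤ E.ext (fun i y => ⨆ x, p (f x) i * fnGraph f x y) z (F.map (TypeCat.ofHom f) t) :=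
            E.comp _ _ _ _
        _ ≤ E.ext (fun i y => p y i) z (F.map (TypeCat.ofHom f) t) := by
            refine E.mono _ _ (fun i y => iSup_le fun x => ?_) _ _
            rw [fnGraph, qmul_iSup hV]
            exact iSup_le fun h => by rw [mul_one, h]
    · calc E.ext (fun i y => p y i) z (F.map (TypeCat.ofHom f) t)
          = E.ext (fun i y => p y i) z (F.map (TypeCat.ofHom f) t) * 1 := (mul_one _).symm
        _ ≤ E.ext (fun i y => p y i) z (F.map (TypeCat.ofHom f) t) *
              E.ext (fun y x => fnGraph f x y) (F.map (TypeCat.ofHom f) t) t :=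
            qmul_le_qmul hV _ (E.lax_map_op f t)
        _ ≤ ⨆ u, E.ext (fun i y => p y i) z u * E.ext (fun y x => fnGraph f x y) u t :=
            le_iSup_of_le (F.map (TypeCat.ofHom f) t) le_rfl
        _ ≤ E.ext (fun i x => ⨆ y, p y i * fnGraph f x y) z t := E.comp _ _ _ _
        _ ≤ E.ext (fun i x => p (f x) i) z t := by
            refine E.mono _ _ (fun i x => iSup_le fun y => ?_) _ _
            rw [fnGraph, qmul_iSup hV]
            exact iSup_le fun h => by rw [mul_one, ← h]

end Aux

/-- adjunction between taking Kantorovich extensions of the compatible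
monotone predicate liftings and inducing liftings from lax extensions:
`\widehat{F}^{MP(L)} ≤ E` iff `L ≤ I(E)`. -/
theorem stmt_13 {V : Type u} [CompleteLattice V] [CommMonoid V] (hV : QuantaleLaw V)
    {F : Type u ⥤ Type u} (L : Lifting V F)
    (hpres : ∀ {X Y : Type u} (a : X → X → V) (b : Y → Y → V) (f : X → Y),
      IsVCat a → IsVCat b → IsInitialVFunctor a b f →
      IsInitialVFunctor (L.str a) (L.str b) (F.map (TypeCat.ofHom f)))
    (E : LaxExt V F) :
    (∀ (X Y : Type u) (r : X → Y → V) (t : F.obj X) (s : F.obj Y),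
        (⨅ (κ : Type u)
          (lam : {lam : PredLifting V F κ // lam.Mono ∧ Compatible L lam})
          (p : X → κ → V),
          qhom (lam.1.app p t) (lam.1.app (fun y i => ⨆ x, p x i * r x y) s))
        ≤ E.ext r t s) ↔
    (∀ (X : Type u) (a : X → X → V), IsVCat a →
        ∀ t s : F.obj X, L.str a t s ≤ E.ext a t s) := by
  constructor
  · -- (i) → (ii)
    intro hi X a ha t s
    refine le_trans ?_ (hi X X a t s)
    refine le_iInf fun κ => le_iInf fun lam => le_iInf fun p => ?_
    obtain ⟨hmono, hcompat⟩ := lam.2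
    set q : X → κ → V := fun y i => ⨆ x, p x i * a x y with hq
    have hqf : IsVFunctor a (powStr κ) q := by
      intro y z
      refine le_iInf fun i => (qhom_adj hV).mpr ?_
      show (⨆ x, p x i * a x y) * a y z ≤ q z i
      rw [mul_comm, qmul_iSup hV]
      refine iSup_le fun x => ?_
      rw [mul_comm (a y z) _, mul_assoc]
      exact le_trans (qmul_le_qmul hV _ (ha.2 x y z)) (le_iSup_of_le x le_rfl)
    have hpq : ∀ x i, p x i ≤ q x i := fun x i => by
      calc p x i = p x i * 1 := (mul_one _).symm
        _ ≤ p x i * a x x := qmul_le_qmul hV _ (ha.1 x)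
        _ ≤ q x i := le_iSup_of_le x le_rfl
    refine (qhom_adj hV).mpr ?_
    have h1 : lam.1.app p t ≤ lam.1.app q t := hmono X p q hpq t
    have h2 : lam.1.app q t * L.str a t s ≤ lam.1.app q s :=
      (qhom_adj hV).mp (hcompat X a ha q hqf t s)
    calc lam.1.app p t * L.str a t s
        = L.str a t s * lam.1.app p t := mul_comm _ _
      _ ≤ L.str a t s * lam.1.app q t := qmul_le_qmul hV _ h1
      _ = lam.1.app q t * L.str a t s := mul_comm _ _
      _ ≤ lam.1.app q s := h2
  · -- (ii) → (i)
    intro hii X Y r t s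
    have hmono : (evalLift hV E t).Mono := by
      intro W p q hpq w
      exact E.mono _ _ (fun i x => hpq x i) _ _
    have hcompat : Compatible L (evalLift hV E t) := by
      intro Z a ha f hf u v
      refine (qhom_adj hV).mpr ?_
      show E.ext (fun i x => f x i) t u * L.str a u v ≤ E.ext (fun i x => f x i) t v
      calc E.ext (fun i x => f x i) t u * L.str a u v
          ≤ E.ext (fun i x => f x i) t u * E.ext a u v :=
            qmul_le_qmul hV _ (hii Z a ha u v)
        _ ≤ ⨆ w, E.ext (fun i x => f x i) t w * E.ext a w v := le_iSup_of_le u le_rfl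
        _ ≤ E.ext (fun i y => ⨆ x, f x i * a x y) t v := E.comp _ _ _ _
        _ ≤ E.ext (fun i x => f x i) t v := by
            refine E.mono _ _ (fun i y => iSup_le fun x => ?_) _ _
            exact (qhom_adj hV).mp (le_trans (hf x y) (iInf_le _ i))
    set p : X → X → V := fun x i => ⨆ _ : i = x, (1 : V) with hp
    refine le_trans (iInf_le_of_le X (iInf_le_of_le
      ⟨evalLift hV E t, hmono, hcompat⟩ (iInf_le _ p))) ?_
    have h1 : (1 : V) ≤ (evalLift hV E t).app p t := by
      have hid : F.map (TypeCat.ofHom (id : X → X)) t = t := by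
          rw [show TypeCat.ofHom (id : X → X) = 𝟙 X from rfl, F.map_id]; rfl
      have hl := E.lax_map (id : X → X) t
      rw [hid] at hl
      refine le_trans hl (le_of_eq ?_)
      show E.ext (fnGraph id) t t = E.ext (fun i x => p x i) t t
      congr 1
    have h2 : (evalLift hV E t).app (fun y i => ⨆ x, p x i * r x y) s = E.ext r t s := by
      show E.ext (fun i y => ⨆ x, p x i * r x y) t s = E.ext r t s
      congr 1
      funext i y
      calc (⨆ x, p x i * r x y) = ⨆ x, ⨆ _ : i = x, r x y := by
            refine iSup_congr fun x => ?_
            rw [hp]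
            rw [mul_comm, qmul_iSup hV]
            exact iSup_congr fun _ => mul_one _
        _ = r i y := by simp
    rw [h2]
    exact le_trans (qhom_anti hV h1 _) (le_of_eq (qhom_one _))
end

section
/- Let V be a commutative unital quantale, F : Type u ⥤ Type u a functor, and L a lifting of F to V-Cat. There exists a V-enriched lax extension E of F to V-Rel (i.e. a lax extension additionally satisfying u ≤ E (u ⊗ 1_X) 𝔵 𝔵 for all u ∈ V, all X : Type u and all 𝔵 ∈ F.obj X, where (u ⊗ 1_X) x y = if x = y then u else ⊥) such that E a = L a for every V-category (X,a), if and only if L preserves initial morphisms and L is V-Cat-enriched, i.e. for all V-functors f, g : (X,a) → (Y,b), ⨅_x b (f x) (g x) ≤ L b (F.map f 𝔵) (F.map g 𝔵) for all 𝔵 ∈ F.obj X. -/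
universe u v w

open CategoryTheory

section QL
variable {V : Type u} [CompleteLattice V] [CommMonoid V]

theorem q_mul_iSup (hV : QuantaleLaw V) {ι : Sort v} (u : V) (f : ι → V) :
    u * (⨆ i, f i) = ⨆ i, u * f i := by
  rw [iSup, hV u (Set.range f), iSup_range]

theorem q_mul_bot (hV : QuantaleLaw V) (u : V) : u * (⊥ : V) = ⊥ := by
  have := hV u ∅
  simpa using this

theorem q_bot_mul (hV : QuantaleLaw V) (u : V) : (⊥ : V) * u = ⊥ := by
  rw [mul_comm]; exact q_mul_bot hV u

theorem q_mul_le_mul_left (hV : QuantaleLaw V) {v w : V} (u : V) (h : v ≤ w) :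
    u * v ≤ u * w := by
  have h1 : u * v ≤ ⨆ x ∈ ({v, w} : Set V), u * x := by
    exact le_iSup₂ (f := fun x (_ : x ∈ ({v, w} : Set V)) => u * x) v (by simp)
  rw [← hV, sSup_pair, sup_eq_right.mpr h] at h1
  exact h1

theorem q_mul_le_mul_right (hV : QuantaleLaw V) {v w : V} (u : V) (h : v ≤ w) :
    v * u ≤ w * u := by
  rw [mul_comm v u, mul_comm w u]; exact q_mul_le_mul_left hV u h

theorem q_mul_le_mul (hV : QuantaleLaw V) {u u' v v' : V} (h1 : u ≤ u') (h2 : v ≤ v') :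
    u * v ≤ u' * v' :=
  le_trans (q_mul_le_mul_left hV u h2) (q_mul_le_mul_right hV v' h1)

theorem q_le_qhom {u v w : V} (h : u * v ≤ w) : v ≤ qhom u w := le_sSup h

theorem q_mul_qhom_le (hV : QuantaleLaw V) (u w : V) : u * qhom u w ≤ w := by
  rw [qhom, hV u _]
  exact iSup₂_le fun v hv => hv

theorem q_qhom_le (hV : QuantaleLaw V) {u w : V} (h : (1 : V) ≤ u) : qhom u w ≤ w :=
  calc qhom u w = 1 * qhom u w := (one_mul _).symm
    _ ≤ u * qhom u w := q_mul_le_mul_right hV _ h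
    _ ≤ w := q_mul_qhom_le hV u w

/-- The discrete structure. -/
def qdelta (V : Type u) [CompleteLattice V] [CommMonoid V] {X : Type v} :
    X → X → V :=
  fun x y => ⨆ _ : x = y, (1 : V)

theorem qdelta_isVCat (hV : QuantaleLaw V) {X : Type v} :
    IsVCat (qdelta V (X := X)) := by
  constructor
  · intro x; rw [qdelta, iSup_pos rfl]
  · intro x y z
    by_cases h : x = y
    · subst h; rw [qdelta, iSup_pos rfl, one_mul]
    · rw [qdelta, iSup_neg h, q_bot_mul hV]; exact bot_le

theorem qdelta_functor (hV : QuantaleLaw V) {X : Type v} {W : Type w}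
    (c : W → W → V) (hc : IsVCat c) (f : X → W) :
    IsVFunctor (qdelta V) c f := by
  intro x y
  by_cases h : x = y
  · subst h; rw [qdelta, iSup_pos rfl]; exact hc.1 _
  · rw [qdelta, iSup_neg h]; exact bot_le

/-- Collage of the evaluation `V`-relation between `V^Y` (with reversed power structure)
and the discrete `Y`. -/
def collD (V : Type u) [CompleteLattice V] [CommMonoid V] (Y : Type u) :
    ((Y → V) ⊕ Y) → ((Y → V) ⊕ Y) → V
  | .inl p, .inl q => ⨅ y, qhom (q y) (p y)
  | .inl p, .inr y => p y
  | .inr _, .inl _ => ⊥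
  | .inr y, .inr y' => ⨆ _ : y = y', (1 : V)

theorem collD_isVCat {V : Type u} [CompleteLattice V] [CommMonoid V]
    (hV : QuantaleLaw V) (Y : Type u) : IsVCat (collD V Y) := by
  constructor
  · rintro (p | y)
    · exact le_iInf fun y => q_le_qhom (by rw [mul_one])
    · exact le_iSup_of_le rfl le_rfl
  · rintro (p | y) (q | y') (w | y'')
    · -- inl inl inl
      refine le_iInf fun z => q_le_qhom ?_
      calc w z * ((⨅ y, qhom (q y) (p y)) * (⨅ y, qhom (w y) (q y)))
          = (w z * (⨅ y, qhom (w y) (q y))) * (⨅ y, qhom (q y) (p y)) := by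
            rw [mul_comm (⨅ y, qhom (q y) (p y)) _, mul_assoc]
        _ ≤ (w z * qhom (w z) (q z)) * qhom (q z) (p z) :=
            q_mul_le_mul hV (q_mul_le_mul_left hV _ (iInf_le _ z)) (iInf_le _ z)
        _ ≤ q z * qhom (q z) (p z) := q_mul_le_mul_right hV _ (q_mul_qhom_le hV _ _)
        _ ≤ p z := q_mul_qhom_le hV _ _
    · -- inl inl inr
      calc (⨅ y, qhom (q y) (p y)) * q y'' = q y'' * (⨅ y, qhom (q y) (p y)) := mul_comm _ _
        _ ≤ q y'' * qhom (q y'') (p y'') := q_mul_le_mul_left hV _ (iInf_le _ y'')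
        _ ≤ p y'' := q_mul_qhom_le hV _ _
    · -- inl inr inl
      rw [show collD V Y (.inr y') (.inl w) = ⊥ from rfl, q_mul_bot hV]; exact bot_le
    · -- inl inr inr : p y' * δ y' y'' ≤ p y''
      by_cases h : y' = y''
      · subst h
        rw [show collD V Y (.inr y') (.inr y') = ⨆ _ : y' = y', (1:V) from rfl, iSup_pos rfl,
          mul_one]
      · rw [show collD V Y (.inr y') (.inr y'') = ⨆ _ : y' = y'', (1:V) from rfl, iSup_neg h,
          q_mul_bot hV]
        exact bot_le
    · rw [show collD V Y (.inr y) (.inl q) = ⊥ from rfl, q_bot_mul hV]; exact bot_le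
    · rw [show collD V Y (.inr y) (.inl q) = ⊥ from rfl, q_bot_mul hV]; exact bot_le
    · rw [show collD V Y (.inr y') (.inl w) = ⊥ from rfl, q_mul_bot hV]; exact bot_le
    · -- inr inr inr
      by_cases h : y = y'
      · subst h
        rw [show collD V Y (.inr y) (.inr y) = ⨆ _ : y = y, (1:V) from rfl, iSup_pos rfl,
          one_mul]
      · rw [show collD V Y (.inr y) (.inr y') = ⨆ _ : y = y', (1:V) from rfl, iSup_neg h,
          q_bot_mul hV]
        exact bot_le


theorem pullback_isVCat {V : Type u} [CompleteLattice V] [CommMonoid V]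
    {W : Type v} {Z : Type w} (c : Z → Z → V) (hc : IsVCat c) (ψ : W → Z) :
    IsVCat (fun w w' => c (ψ w) (ψ w')) :=
  ⟨fun w => hc.1 _, fun w w' w'' => hc.2 _ _ _⟩

theorem Fmap_comp_apply (F : Type u ⥤ Type u) {X Y Z : Type u} (f : X → Y) (g : Y → Z)
    (t : F.obj X) : F.map (TypeCat.ofHom (fun x => g (f x))) t = F.map (TypeCat.ofHom g) (F.map (TypeCat.ofHom f) t) :=
  (FunctorToTypes.map_comp_apply F (TypeCat.ofHom f) (TypeCat.ofHom g) t)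

theorem Fmap_id_apply (F : Type u ⥤ Type u) {X : Type u} (t : F.obj X) :
    F.map (TypeCat.ofHom (fun x => x)) t = t :=
  FunctorToTypes.map_id_apply F t

end QL

/-- a lifting is induced by a `V`-enriched lax extension iff it preserves
initial morphisms and is `V`-Cat-enriched. -/
theorem stmt_15 {V : Type u} [CompleteLattice V] [CommMonoid V] (hV : QuantaleLaw V)
    {F : Type u ⥤ Type u} (L : Lifting V F) :
    (∃ E : LaxExt V F,
      (∀ (u : V) (X : Type u) (t : F.obj X),
        u ≤ E.ext (fun x y => ⨆ _ : x = y, u) t t) ∧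
      (∀ (X : Type u) (a : X → X → V), IsVCat a →
        ∀ t s : F.obj X, E.ext a t s = L.str a t s)) ↔
    ((∀ {X Y : Type u} (a : X → X → V) (b : Y → Y → V) (f : X → Y),
        IsVCat a → IsVCat b → IsInitialVFunctor a b f →
        IsInitialVFunctor (L.str a) (L.str b) (F.map (TypeCat.ofHom f))) ∧
     (∀ (X Y : Type u) (a : X → X → V) (b : Y → Y → V), IsVCat a → IsVCat b →
        ∀ f g : X → Y, IsVFunctor a b f → IsVFunctor a b g →
        ∀ t : F.obj X, (⨅ x, b (f x) (g x)) ≤ L.str b (F.map (TypeCat.ofHom f) t) (F.map (TypeCat.ofHom g) t))) := by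
  constructor
  · -- Forward direction
    rintro ⟨E, henr, heq⟩
    constructor
    · -- preserves initial morphisms
      intro X Y a b f ha hb hini t s
      apply le_antisymm
      · exact L.map a b f ha hb (fun x y => (hini x y).le) t s
      · rw [← heq X a ha, ← heq Y b hb]
        have step1 : E.ext b (F.map (TypeCat.ofHom f) t) (F.map (TypeCat.ofHom f) s) ≤
            E.ext (fun x z => ⨆ y, fnGraph f x y * b y z) t (F.map (TypeCat.ofHom f) s) := by
          calc E.ext b (F.map (TypeCat.ofHom f) t) (F.map (TypeCat.ofHom f) s)
              = 1 * E.ext b (F.map (TypeCat.ofHom f) t) (F.map (TypeCat.ofHom f) s) := (one_mul _).symm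
            _ ≤ E.ext (fnGraph f) t (F.map (TypeCat.ofHom f) t) * E.ext b (F.map (TypeCat.ofHom f) t) (F.map (TypeCat.ofHom f) s) :=
                q_mul_le_mul_right hV _ (E.lax_map f t)
            _ ≤ ⨆ u, E.ext (fnGraph f) t u * E.ext b u (F.map (TypeCat.ofHom f) s) :=
                le_iSup (fun u => E.ext (fnGraph f) t u * E.ext b u (F.map (TypeCat.ofHom f) s)) (F.map (TypeCat.ofHom f) t)
            _ ≤ _ := E.comp (fnGraph f) b t (F.map (TypeCat.ofHom f) s)
        have step2 : E.ext (fun x z => ⨆ y, fnGraph f x y * b y z) t (F.map (TypeCat.ofHom f) s) ≤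
            E.ext (fun x x' => ⨆ y, (⨆ y0, fnGraph f x y0 * b y0 y) *
              (fun y x' => fnGraph f x' y) y x') t s := by
          calc E.ext (fun x z => ⨆ y, fnGraph f x y * b y z) t (F.map (TypeCat.ofHom f) s)
              = E.ext (fun x z => ⨆ y, fnGraph f x y * b y z) t (F.map (TypeCat.ofHom f) s) * 1 :=
                (mul_one _).symm
            _ ≤ E.ext (fun x z => ⨆ y, fnGraph f x y * b y z) t (F.map (TypeCat.ofHom f) s) *
                E.ext (fun y x' => fnGraph f x' y) (F.map (TypeCat.ofHom f) s) s :=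
                q_mul_le_mul_left hV _ (E.lax_map_op f s)
            _ ≤ ⨆ u, E.ext (fun x z => ⨆ y, fnGraph f x y * b y z) t u *
                E.ext (fun y x' => fnGraph f x' y) u s :=
                le_iSup (fun u => E.ext (fun x z => ⨆ y, fnGraph f x y * b y z) t u *
                  E.ext (fun y x' => fnGraph f x' y) u s) (F.map (TypeCat.ofHom f) s)
            _ ≤ _ := E.comp _ _ t s
        refine le_trans (le_trans step1 step2) (E.mono _ a ?_ t s)
        intro x x'
        refine iSup_le fun y => ?_
        show (⨆ y0, fnGraph f x y0 * b y0 y) * fnGraph f x' y ≤ a x x'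
        by_cases h : f x' = y
        · rw [show fnGraph f x' y = ⨆ _ : f x' = y, (1:V) from rfl, iSup_pos h, mul_one]
          refine iSup_le fun y0 => ?_
          by_cases h0 : f x = y0
          · rw [show fnGraph f x y0 = ⨆ _ : f x = y0, (1:V) from rfl, iSup_pos h0, one_mul]
            subst h0; subst h
            exact (hini x x').ge
          · rw [show fnGraph f x y0 = ⨆ _ : f x = y0, (1:V) from rfl, iSup_neg h0,
              q_bot_mul hV]
            exact bot_le
        · rw [show fnGraph f x' y = ⨆ _ : f x' = y, (1:V) from rfl, iSup_neg h, q_mul_bot hV]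
          exact bot_le
    · -- V-Cat-enriched
      intro X Y a b ha hb f g hf hg t
      rw [← heq Y b hb]
      have h1 : (1:V) ≤ E.ext (fun y x => fnGraph f x y) (F.map (TypeCat.ofHom f) t) t := E.lax_map_op f t
      have h2 : (⨅ x, b (f x) (g x)) ≤
          E.ext (fun x y => ⨆ _ : x = y, (⨅ x, b (f x) (g x))) t t := henr _ X t
      have h3 : (1:V) ≤ E.ext (fnGraph g) t (F.map (TypeCat.ofHom g) t) := E.lax_map g t
      have c1 : E.ext (fun y x => fnGraph f x y) (F.map (TypeCat.ofHom f) t) t *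
          E.ext (fun x y => ⨆ _ : x = y, (⨅ x, b (f x) (g x))) t t ≤
          E.ext (fun y x' => ⨆ x, fnGraph f x y * ⨆ _ : x = x', (⨅ x, b (f x) (g x)))
            (F.map (TypeCat.ofHom f) t) t := by
        refine le_trans (le_iSup (fun u => E.ext (fun y x => fnGraph f x y) (F.map (TypeCat.ofHom f) t) u *
          E.ext (fun x y => ⨆ _ : x = y, (⨅ x, b (f x) (g x))) u t) t)
          (E.comp _ _ (F.map (TypeCat.ofHom f) t) t)
      have c2 : E.ext (fun y x' => ⨆ x, fnGraph f x y * ⨆ _ : x = x', (⨅ x, b (f x) (g x)))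
            (F.map (TypeCat.ofHom f) t) t * E.ext (fnGraph g) t (F.map (TypeCat.ofHom g) t) ≤
          E.ext (fun y y' => ⨆ x', (⨆ x, fnGraph f x y * ⨆ _ : x = x', (⨅ x, b (f x) (g x)))
            * fnGraph g x' y') (F.map (TypeCat.ofHom f) t) (F.map (TypeCat.ofHom g) t) := by
        refine le_trans (le_iSup (fun u =>
          E.ext (fun y x' => ⨆ x, fnGraph f x y * ⨆ _ : x = x', (⨅ x, b (f x) (g x)))
            (F.map (TypeCat.ofHom f) t) u * E.ext (fnGraph g) u (F.map (TypeCat.ofHom g) t)) t)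
          (E.comp _ _ (F.map (TypeCat.ofHom f) t) (F.map (TypeCat.ofHom g) t))
      have hpt : ∀ y y', (⨆ x', (⨆ x, fnGraph f x y * ⨆ _ : x = x', (⨅ x, b (f x) (g x)))
            * fnGraph g x' y') ≤ b y y' := by
        intro y y'
        refine iSup_le fun x' => ?_
        by_cases h4 : g x' = y'
        · rw [show fnGraph g x' y' = ⨆ _ : g x' = y', (1:V) from rfl, iSup_pos h4, mul_one]
          refine iSup_le fun x => ?_
          by_cases h5 : x = x'
          · rw [iSup_pos h5]
            subst h5
            by_cases h6 : f x = y
            · rw [show fnGraph f x y = ⨆ _ : f x = y, (1:V) from rfl, iSup_pos h6, one_mul]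
              subst h6; subst h4
              exact iInf_le _ x
            · rw [show fnGraph f x y = ⨆ _ : f x = y, (1:V) from rfl, iSup_neg h6,
                q_bot_mul hV]
              exact bot_le
          · rw [iSup_neg h5, q_mul_bot hV]
            exact bot_le
        · rw [show fnGraph g x' y' = ⨆ _ : g x' = y', (1:V) from rfl, iSup_neg h4,
            q_mul_bot hV]
          exact bot_le
      calc (⨅ x, b (f x) (g x))
          = 1 * (⨅ x, b (f x) (g x)) * 1 := by rw [one_mul, mul_one]
        _ ≤ E.ext (fun y x => fnGraph f x y) (F.map (TypeCat.ofHom f) t) t *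
            E.ext (fun x y => ⨆ _ : x = y, (⨅ x, b (f x) (g x))) t t *
            E.ext (fnGraph g) t (F.map (TypeCat.ofHom g) t) :=
            q_mul_le_mul hV (q_mul_le_mul hV h1 h2) h3
        _ ≤ E.ext (fun y x' => ⨆ x, fnGraph f x y * ⨆ _ : x = x', (⨅ x, b (f x) (g x)))
            (F.map (TypeCat.ofHom f) t) t * E.ext (fnGraph g) t (F.map (TypeCat.ofHom g) t) := q_mul_le_mul_right hV _ c1
        _ ≤ E.ext (fun y y' => ⨆ x', (⨆ x, fnGraph f x y * ⨆ _ : x = x', (⨅ x, b (f x) (g x)))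
            * fnGraph g x' y') (F.map (TypeCat.ofHom f) t) (F.map (TypeCat.ofHom g) t) := c2
        _ ≤ E.ext b (F.map (TypeCat.ofHom f) t) (F.map (TypeCat.ofHom g) t) := E.mono _ b hpt _ _
  · -- Backward direction
    rintro ⟨hInit, hEnr⟩
    have hD : ∀ Y : Type u, IsVCat (collD V Y) := collD_isVCat hV
    have hLD : ∀ Y : Type u, IsVCat (L.str (collD V Y)) := fun Y => L.isVCat _ (hD Y)
    refine ⟨⟨fun {X Y} r t s =>
        L.str (collD V Y) (F.map (TypeCat.ofHom (fun x => Sum.inl (r x))) t) (F.map (TypeCat.ofHom Sum.inr) s),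
        ?_, ?_, ?_, ?_⟩, ?_, ?_⟩
    · -- mono
      intro X Y r r' hrr t s
      have h1 : (1:V) ≤ L.str (collD V Y) (F.map (TypeCat.ofHom (fun x => Sum.inl (r' x))) t)
          (F.map (TypeCat.ofHom (fun x => Sum.inl (r x))) t) := by
        refine le_trans ?_ (hEnr X ((Y → V) ⊕ Y) (qdelta V) (collD V Y)
          (qdelta_isVCat hV) (hD Y) _ _ (qdelta_functor hV _ (hD Y) _)
          (qdelta_functor hV _ (hD Y) _) t)
        refine le_iInf fun x => ?_
        show (1:V) ≤ ⨅ y, qhom (r x y) (r' x y)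
        exact le_iInf fun y => q_le_qhom (by rw [mul_one]; exact hrr x y)
      calc L.str (collD V Y) (F.map (TypeCat.ofHom (fun x => Sum.inl (r x))) t) (F.map (TypeCat.ofHom Sum.inr) s)
          = 1 * L.str (collD V Y) (F.map (TypeCat.ofHom (fun x => Sum.inl (r x))) t) (F.map (TypeCat.ofHom Sum.inr) s) :=
            (one_mul _).symm
        _ ≤ L.str (collD V Y) (F.map (TypeCat.ofHom (fun x => Sum.inl (r' x))) t)
              (F.map (TypeCat.ofHom (fun x => Sum.inl (r x))) t) *
            L.str (collD V Y) (F.map (TypeCat.ofHom (fun x => Sum.inl (r x))) t) (F.map (TypeCat.ofHom Sum.inr) s) :=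
            q_mul_le_mul_right hV _ h1
        _ ≤ _ := (hLD Y).2 _ _ _
    · -- comp
      intro X Y Z r s t w
      refine iSup_le fun u => ?_
      set θ : ((Y → V) ⊕ Y) → ((Z → V) ⊕ Z) :=
        Sum.elim (fun p => Sum.inl (fun z => ⨆ y, p y * s y z)) (fun y => Sum.inl (s y))
        with hθdef
      have hθ : IsVFunctor (collD V Y) (collD V Z) θ := by
        rintro (p | y) (q | y')
        · show (⨅ y, qhom (q y) (p y)) ≤
            ⨅ z, qhom (⨆ y, q y * s y z) (⨆ y, p y * s y z)
          refine le_iInf fun z => q_le_qhom ?_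
          rw [mul_comm, q_mul_iSup hV]
          refine iSup_le fun y => ?_
          calc (⨅ y0, qhom (q y0) (p y0)) * (q y * s y z)
              = ((⨅ y0, qhom (q y0) (p y0)) * q y) * s y z := (mul_assoc _ _ _).symm
            _ ≤ (qhom (q y) (p y) * q y) * s y z :=
                q_mul_le_mul_right hV _ (q_mul_le_mul_right hV _ (iInf_le _ y))
            _ = (q y * qhom (q y) (p y)) * s y z := by rw [mul_comm (qhom (q y) (p y))]
            _ ≤ p y * s y z := q_mul_le_mul_right hV _ (q_mul_qhom_le hV _ _)
            _ ≤ ⨆ y, p y * s y z := le_iSup (fun y => p y * s y z) y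
        · show p y' ≤ ⨅ z, qhom (s y' z) (⨆ y, p y * s y z)
          refine le_iInf fun z => q_le_qhom ?_
          rw [mul_comm]
          exact le_iSup (fun y => p y * s y z) y'
        · exact bot_le
        · show (⨆ _ : y = y', (1:V)) ≤ ⨅ z, qhom (s y' z) (s y z)
          by_cases h : y = y'
          · subst h
            rw [iSup_pos rfl]
            exact le_iInf fun z => q_le_qhom (by rw [mul_one])
          · rw [iSup_neg h]; exact bot_le
      have hmapθ := L.map (collD V Y) (collD V Z) θ (hD Y) (hD Z) hθ
      have e1 : L.str (collD V Y) (F.map (TypeCat.ofHom (fun x => Sum.inl (r x))) t) (F.map (TypeCat.ofHom Sum.inr) u) ≤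
          L.str (collD V Z) (F.map (TypeCat.ofHom (fun x => Sum.inl fun z => ⨆ y, r x y * s y z)) t)
            (F.map (TypeCat.ofHom (fun y => Sum.inl (s y))) u) := by
        have := hmapθ (F.map (TypeCat.ofHom (fun x => Sum.inl (r x))) t) (F.map (TypeCat.ofHom Sum.inr) u)
        rw [← Fmap_comp_apply, ← Fmap_comp_apply] at this
        exact this
      calc L.str (collD V Y) (F.map (TypeCat.ofHom (fun x => Sum.inl (r x))) t) (F.map (TypeCat.ofHom Sum.inr) u) *
            L.str (collD V Z) (F.map (TypeCat.ofHom (fun y => Sum.inl (s y))) u) (F.map (TypeCat.ofHom Sum.inr) w)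
          ≤ L.str (collD V Z) (F.map (TypeCat.ofHom (fun x => Sum.inl fun z => ⨆ y, r x y * s y z)) t)
              (F.map (TypeCat.ofHom (fun y => Sum.inl (s y))) u) *
            L.str (collD V Z) (F.map (TypeCat.ofHom (fun y => Sum.inl (s y))) u) (F.map (TypeCat.ofHom Sum.inr) w) :=
            q_mul_le_mul_right hV _ e1
        _ ≤ _ := (hLD Z).2 _ _ _
    · -- lax_map
      intro X Y f t
      show (1:V) ≤ L.str (collD V Y) (F.map (TypeCat.ofHom (fun x => Sum.inl (fnGraph f x))) t)
        (F.map (TypeCat.ofHom Sum.inr) (F.map (TypeCat.ofHom f) t))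
      rw [← Fmap_comp_apply F f Sum.inr t]
      refine le_trans ?_ (hEnr X ((Y → V) ⊕ Y) (qdelta V) (collD V Y)
        (qdelta_isVCat hV) (hD Y) (fun x => Sum.inl (fnGraph f x)) (fun x => Sum.inr (f x))
        (qdelta_functor hV _ (hD Y) _) (qdelta_functor hV _ (hD Y) _) t)
      refine le_iInf fun x => ?_
      show (1:V) ≤ ⨆ _ : f x = f x, (1:V)
      rw [iSup_pos rfl]
    · -- lax_map_op
      intro X Y f t
      show (1:V) ≤ L.str (collD V X)
        (F.map (TypeCat.ofHom (fun y => Sum.inl fun x' => fnGraph f x' y)) (F.map (TypeCat.ofHom f) t)) (F.map (TypeCat.ofHom Sum.inr) t)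
      rw [← Fmap_comp_apply F f (fun y => Sum.inl fun x' => fnGraph f x' y) t]
      refine le_trans ?_ (hEnr X ((X → V) ⊕ X) (qdelta V) (collD V X)
        (qdelta_isVCat hV) (hD X) (fun x => Sum.inl fun x' => fnGraph f x' (f x)) Sum.inr
        (qdelta_functor hV _ (hD X) _) (qdelta_functor hV _ (hD X) _) t)
      refine le_iInf fun x => ?_
      show (1:V) ≤ ⨆ _ : f x = f x, (1:V)
      rw [iSup_pos rfl]
    · -- enriched
      intro u X t
      show u ≤ L.str (collD V X)
        (F.map (TypeCat.ofHom (fun x => Sum.inl fun y => ⨆ _ : x = y, u)) t) (F.map (TypeCat.ofHom Sum.inr) t)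
      refine le_trans ?_ (hEnr X ((X → V) ⊕ X) (qdelta V) (collD V X)
        (qdelta_isVCat hV) (hD X) (fun x => Sum.inl fun y => ⨆ _ : x = y, u) Sum.inr
        (qdelta_functor hV _ (hD X) _) (qdelta_functor hV _ (hD X) _) t)
      refine le_iInf fun x => ?_
      show u ≤ ⨆ _ : x = x, u
      rw [iSup_pos rfl]
    · -- agrees with L on V-categories
      intro X a ha t s
      show L.str (collD V X) (F.map (TypeCat.ofHom (fun x => Sum.inl (a x))) t) (F.map (TypeCat.ofHom Sum.inr) s) = L.str a t s
      apply le_antisymm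
      · -- ext a t s ≤ L.str a t s
        set ψ : (X ⊕ X) → ((X → V) ⊕ X) := Sum.elim (fun x => Sum.inl (a x)) Sum.inr
          with hψdef
        have hc : IsVCat (fun w w' => collD V X (ψ w) (ψ w')) :=
          pullback_isVCat _ (hD X) ψ
        have hinit := hInit (fun w w' => collD V X (ψ w) (ψ w')) (collD V X) ψ hc (hD X)
          (fun w w' => rfl)
        have e1 : L.str (collD V X) (F.map (TypeCat.ofHom (fun x => Sum.inl (a x))) t) (F.map (TypeCat.ofHom Sum.inr) s) =
            L.str (fun w w' => collD V X (ψ w) (ψ w')) (F.map (TypeCat.ofHom Sum.inl) t) (F.map (TypeCat.ofHom Sum.inr) s) := by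
          rw [hinit (F.map (TypeCat.ofHom Sum.inl) t) (F.map (TypeCat.ofHom Sum.inr) s), ← Fmap_comp_apply, ← Fmap_comp_apply]
          rfl
        rw [e1]
        set d : (X ⊕ X) → (X ⊕ X) → V := fun w w' => a (Sum.elim id id w) (Sum.elim id id w')
          with hddef
        have hd : IsVCat d := pullback_isVCat a ha (Sum.elim id id)
        have hcd : IsVFunctor (fun w w' => collD V X (ψ w) (ψ w')) d (fun w => w) := by
          rintro (x | x) (x' | x')
          · show (⨅ y, qhom (a x' y) (a x y)) ≤ a x x'
            exact le_trans (iInf_le _ x') (q_qhom_le hV (ha.1 x'))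
          · exact le_rfl
          · exact bot_le
          · show (⨆ _ : x = x', (1:V)) ≤ a x x'
            by_cases h : x = x'
            · subst h; rw [iSup_pos rfl]; exact ha.1 x
            · rw [iSup_neg h]; exact bot_le
        have h3 := L.map _ d (fun w => w) hc hd hcd (F.map (TypeCat.ofHom Sum.inl) t) (F.map (TypeCat.ofHom Sum.inr) s)
        rw [Fmap_id_apply, Fmap_id_apply] at h3
        refine le_trans h3 ?_
        have h4 := hInit d a (Sum.elim id id) hd ha (fun w w' => rfl)
          (F.map (TypeCat.ofHom Sum.inl) t) (F.map (TypeCat.ofHom Sum.inr) s)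
        rw [← Fmap_comp_apply, ← Fmap_comp_apply] at h4
        simp only [Sum.elim_inl, Sum.elim_inr, id_eq] at h4
        rw [Fmap_id_apply, Fmap_id_apply] at h4
        exact h4.le
      · -- L.str a t s ≤ ext a t s
        have hfun : IsVFunctor a (collD V X) (fun x => Sum.inl (a x)) := by
          intro x x'
          show a x x' ≤ ⨅ y, qhom (a x' y) (a x y)
          exact le_iInf fun y => q_le_qhom (by rw [mul_comm]; exact ha.2 x x' y)
        have h1 := L.map a (collD V X) (fun x => Sum.inl (a x)) ha (hD X) hfun t s
        have h2 : (1:V) ≤ L.str (collD V X) (F.map (TypeCat.ofHom (fun x => Sum.inl (a x))) s)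
            (F.map (TypeCat.ofHom Sum.inr) s) := by
          refine le_trans ?_ (hEnr X ((X → V) ⊕ X) (qdelta V) (collD V X)
            (qdelta_isVCat hV) (hD X) (fun x => Sum.inl (a x)) Sum.inr
            (qdelta_functor hV _ (hD X) _) (qdelta_functor hV _ (hD X) _) s)
          refine le_iInf fun x => ?_
          show (1:V) ≤ a x x
          exact ha.1 x
        calc L.str a t s = L.str a t s * 1 := (mul_one _).symm
          _ ≤ L.str (collD V X) (F.map (TypeCat.ofHom (fun x => Sum.inl (a x))) t)
                (F.map (TypeCat.ofHom (fun x => Sum.inl (a x))) s) *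
              L.str (collD V X) (F.map (TypeCat.ofHom (fun x => Sum.inl (a x))) s) (F.map (TypeCat.ofHom Sum.inr) s) :=
              q_mul_le_mul hV h1 h2
          _ ≤ _ := (L.isVCat _ (hD X)).2 _ _ _
end
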